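/- arXiv:2112.14136 — 2 statements merged into one kernel-verified Lean document; each statement's English description precedes it below -/
import Mathlib

section
/- Let G : ℝ^d \ {0} → ℝ be a function homogeneous of degree -(d-1) and of class C^1 off the origin. Then for each i = 1,...,d, the integral of the partial derivative ∂_i G over the unit sphere (with respect to surface measure) equals zero. -/
open MeasureTheory Filter Topology Metric Set
open scoped Classical ENNReal Pointwise RealInnerProductSpace

namespace SphereAux

section Abstract

variable {X : Type*} [MetricSpace X] [MeasurableSpace X] [BorelSpace X]
  [SecondCountableTopology X]

lemma symm_identity (μ ν : Measure X) [IsFiniteMeasure μ] [IsFiniteMeasure ν]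
    {U : Set X} (hU : MeasurableSet U) (r : ℝ) :
    ∫⁻ x in U, ν (U ∩ ball x r) ∂μ = ∫⁻ y in U, μ (U ∩ ball y r) ∂ν := by
  set s : Set (X × X) := (U ×ˢ U) ∩ {p : X × X | dist p.1 p.2 < r} with hs_def
  have hs : MeasurableSet s :=
    (hU.prod hU).inter ((isOpen_lt continuous_dist continuous_const).measurableSet)
  have hpre1 : ∀ x, Prod.mk x ⁻¹' s = if x ∈ U then U ∩ ball x r else ∅ := by
    intro x
    split_ifs with hx
    · ext y
      simp only [hs_def, mem_preimage, mem_inter_iff, mem_prod, mem_setOf_eq, mem_ball]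
      exact ⟨fun ⟨⟨_, hy⟩, hd⟩ => ⟨hy, by rwa [dist_comm]⟩,
        fun ⟨hy, hd⟩ => ⟨⟨hx, hy⟩, by rwa [dist_comm]⟩⟩
    · ext y
      simp only [hs_def, mem_preimage, mem_inter_iff, mem_prod, mem_setOf_eq, mem_empty_iff_false,
        iff_false]
      rintro ⟨⟨hx', -⟩, -⟩; exact hx hx'
  have hpre2 : ∀ y, (fun x => (x, y)) ⁻¹' s = if y ∈ U then U ∩ ball y r else ∅ := by
    intro y
    split_ifs with hy
    · ext x
      simp only [hs_def, mem_preimage, mem_inter_iff, mem_prod, mem_setOf_eq, mem_ball]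
      exact ⟨fun ⟨⟨hx, _⟩, hd⟩ => ⟨hx, hd⟩, fun ⟨hx, hd⟩ => ⟨⟨hx, hy⟩, hd⟩⟩
    · ext x
      simp only [hs_def, mem_preimage, mem_inter_iff, mem_prod, mem_setOf_eq, mem_empty_iff_false,
        iff_false]
      rintro ⟨⟨-, hy'⟩, -⟩; exact hy hy'
  have key1 : ∀ x, ∫⁻ y, s.indicator 1 (x, y) ∂ν = U.indicator (fun x => ν (U ∩ ball x r)) x := by
    intro x
    have h : ∫⁻ y, s.indicator 1 (x, y) ∂ν = ν (Prod.mk x ⁻¹' s) :=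
      lintegral_indicator_one (measurable_prodMk_left hs)
    rw [h, hpre1 x]
    by_cases hx : x ∈ U <;> simp [hx]
  have key2 : ∀ y, ∫⁻ x, s.indicator 1 (x, y) ∂μ = U.indicator (fun y => μ (U ∩ ball y r)) y := by
    intro y
    have h : ∫⁻ x, s.indicator 1 (x, y) ∂μ = μ ((fun x => (x, y)) ⁻¹' s) :=
      lintegral_indicator_one (measurable_prodMk_right hs)
    rw [h, hpre2 y]
    by_cases hy : y ∈ U <;> simp [hy]
  calc ∫⁻ x in U, ν (U ∩ ball x r) ∂μ
      = ∫⁻ x, U.indicator (fun x => ν (U ∩ ball x r)) x ∂μ := (lintegral_indicator hU _).symm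
    _ = ∫⁻ x, ∫⁻ y, s.indicator 1 (x, y) ∂ν ∂μ := lintegral_congr fun x => (key1 x).symm
    _ = ∫⁻ y, ∫⁻ x, s.indicator 1 (x, y) ∂μ ∂ν :=
        lintegral_lintegral_swap ((measurable_const.indicator hs).aemeasurable)
    _ = ∫⁻ y, U.indicator (fun y => μ (U ∩ ball y r)) y ∂ν := lintegral_congr fun y => key2 y
    _ = ∫⁻ y in U, μ (U ∩ ball y r) ∂ν := lintegral_indicator hU _


variable [CompactSpace X]

/-- every ball of positive radius has positive measure, given invariance and nontriviality -/
lemma ball_pos (μ : Measure X) (hμ : ∀ (x y : X) (r : ℝ), μ (ball x r) = μ (ball y r))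
    (hμ0 : μ ≠ 0) {r : ℝ} (hr : 0 < r) (x : X) : 0 < μ (ball x r) := by
  rcases eq_zero_or_pos (μ (ball x r)) with h | h
  · exfalso
    obtain ⟨t, ht⟩ := isCompact_univ.elim_finite_subcover (fun y : X => ball y r)
      (fun y => isOpen_ball) (fun y _ => mem_iUnion.2 ⟨y, mem_ball_self hr⟩)
    have : μ univ = 0 := by
      refine le_antisymm ?_ zero_le
      refine le_trans (measure_mono ht) ?_
      refine le_trans (measure_biUnion_finset_le t _) ?_
      have : ∀ y ∈ t, μ (ball y r) = 0 := fun y _ => (hμ y x r).trans h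
      simp [Finset.sum_congr rfl this]
    exact hμ0 (Measure.measure_univ_eq_zero.mp this)
  · exact h

lemma measurable_inter_ball (ν : Measure X) [IsFiniteMeasure ν] {U : Set X}
    (hU : MeasurableSet U) (r : ℝ) :
    Measurable fun x => ν (U ∩ ball x r) := by
  set s : Set (X × X) := {p : X × X | p.2 ∈ U ∧ dist p.2 p.1 < r} with hs_def
  have hs : MeasurableSet s := by
    have h1 : MeasurableSet {p : X × X | p.2 ∈ U} := measurable_snd hU
    have h2 : MeasurableSet {p : X × X | dist p.2 p.1 < r} :=
      (isOpen_lt (continuous_dist.comp (continuous_snd.prodMk continuous_fst))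
        continuous_const).measurableSet
    exact h1.inter h2
  have h := measurable_measure_prodMk_left (ν := ν) hs
  have hset : ∀ x, Prod.mk x ⁻¹' s = U ∩ ball x r := by
    intro x; ext y; simp [hs_def, mem_ball]
  simpa [hset] using h

/-- Two nonzero finite "uniformly distributed" measures on a compact metric space are
proportional. -/
lemma measure_eq_smul (μ ν : Measure X) [IsFiniteMeasure μ] [IsFiniteMeasure ν]
    (hμ : ∀ (x y : X) (r : ℝ), μ (ball x r) = μ (ball y r))
    (hν : ∀ (x y : X) (r : ℝ), ν (ball x r) = ν (ball y r))
    (hμ0 : μ ≠ 0) (hν0 : ν ≠ 0) :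
    μ = (μ univ / ν univ) • ν := by
  have hμU : μ univ ≠ 0 := fun h => hμ0 (Measure.measure_univ_eq_zero.mp h)
  have hνU : ν univ ≠ 0 := fun h => hν0 (Measure.measure_univ_eq_zero.mp h)
  have hμT : μ univ ≠ ∞ := measure_ne_top μ univ
  have hνT : ν univ ≠ ∞ := measure_ne_top ν univ
  have hX : Nonempty X := by
    by_contra h
    exact hμU (by simp [univ_eq_empty_iff.2 (not_nonempty_iff.mp h)])
  obtain ⟨x₀⟩ := hX
  -- the key constant relation
  have key : ∀ r : ℝ, ν (ball x₀ r) * μ univ = μ (ball x₀ r) * ν univ := by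
    intro r
    have h := symm_identity μ ν MeasurableSet.univ r
    simp only [univ_inter] at h
    have h1 : ∫⁻ x in univ, ν (ball x r) ∂μ = ν (ball x₀ r) * μ univ := by
      rw [setLIntegral_congr_fun_ae MeasurableSet.univ
        (ae_of_all _ fun x _ => (hν x x₀ r : ν (ball x r) = ν (ball x₀ r)))]
      simp [Measure.restrict_univ, lintegral_const]
    have h2 : ∫⁻ y in univ, μ (ball y r) ∂ν = μ (ball x₀ r) * ν univ := by
      rw [setLIntegral_congr_fun_ae MeasurableSet.univ
        (ae_of_all _ fun y _ => (hμ y x₀ r : μ (ball y r) = μ (ball x₀ r)))]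
      simp [Measure.restrict_univ, lintegral_const]
    rw [← h1, ← h2, h]
  -- main inequality for open sets
  have main : ∀ (μ' ν' : Measure X), IsFiniteMeasure μ' → IsFiniteMeasure ν' →
      (∀ (x y : X) (r : ℝ), μ' (ball x r) = μ' (ball y r)) →
      (∀ (x y : X) (r : ℝ), ν' (ball x r) = ν' (ball y r)) →
      μ' ≠ 0 → ν' ≠ 0 →
      ∀ U : Set X, IsOpen U → μ' U ≤ (μ' univ / ν' univ) * ν' U := by
    intro μ' ν' hfin₁ hfin₂ hμ' hν' hμ0' hν0'
    haveI := hfin₁; haveI := hfin₂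
    have hμU' : μ' univ ≠ 0 := fun h => hμ0' (Measure.measure_univ_eq_zero.mp h)
    have hνU' : ν' univ ≠ 0 := fun h => hν0' (Measure.measure_univ_eq_zero.mp h)
    have hμT' : μ' univ ≠ ∞ := measure_ne_top μ' univ
    have hνT' : ν' univ ≠ ∞ := measure_ne_top ν' univ
    have key' : ∀ r : ℝ, ν' (ball x₀ r) * μ' univ = μ' (ball x₀ r) * ν' univ := by
      intro r
      have h := symm_identity μ' ν' MeasurableSet.univ r
      simp only [univ_inter] at h
      have h1 : ∫⁻ x in univ, ν' (ball x r) ∂μ' = ν' (ball x₀ r) * μ' univ := by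
        rw [setLIntegral_congr_fun_ae MeasurableSet.univ
          (ae_of_all _ fun x _ => (hν' x x₀ r : ν' (ball x r) = ν' (ball x₀ r)))]
        simp [Measure.restrict_univ, lintegral_const]
      have h2 : ∫⁻ y in univ, μ' (ball y r) ∂ν' = μ' (ball x₀ r) * ν' univ := by
        rw [setLIntegral_congr_fun_ae MeasurableSet.univ
          (ae_of_all _ fun y _ => (hμ' y x₀ r : μ' (ball y r) = μ' (ball x₀ r)))]
        simp [Measure.restrict_univ, lintegral_const]
      rw [← h1, ← h2, h]
    intro U hUopen
    set c := μ' univ / ν' univ with hc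
    set rr : ℕ → ℝ := fun n => ((n : ℝ) + 1)⁻¹ with hrr
    have hrpos : ∀ n, 0 < rr n := fun n => by positivity
    have hr0 : Tendsto rr atTop (nhds 0) := by
      simpa [hrr, one_div] using tendsto_one_div_add_atTop_nhds_zero_nat (𝕜 := ℝ)
    set g : ℕ → ℝ≥0∞ := fun n => ν' (ball x₀ (rr n)) with hg
    set f : ℕ → ℝ≥0∞ := fun n => μ' (ball x₀ (rr n)) with hf
    have hgpos : ∀ n, g n ≠ 0 := fun n => (ball_pos ν' hν' hν0' (hrpos n) x₀).ne'
    have hgfin : ∀ n, g n ≠ ∞ := fun n => measure_ne_top _ _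
    have hfc : ∀ n, f n = c * g n := by
      intro n
      have h := key' (rr n)
      have h2 : f n = g n * μ' univ / ν' univ := (ENNReal.eq_div_iff hνU' hνT').mpr ((mul_comm (ν' univ) (f n)).trans h.symm)
      rw [h2, hc, div_eq_mul_inv, div_eq_mul_inv]
      ring
    have hmeas : ∀ n, Measurable fun x => ν' (U ∩ ball x (rr n)) :=
      fun n => measurable_inter_ball ν' hUopen.measurableSet (rr n)
    have step1 : μ' U ≤ liminf
        (fun n => ∫⁻ x in U, (g n)⁻¹ * ν' (U ∩ ball x (rr n)) ∂μ') atTop := by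
      have pt : ∀ x ∈ U, (1 : ℝ≥0∞) ≤ liminf
          (fun n => (g n)⁻¹ * ν' (U ∩ ball x (rr n))) atTop := by
        intro x hx
        obtain ⟨ε, hε, hball⟩ := Metric.isOpen_iff.mp hUopen x hx
        have hev : ∀ᶠ n in atTop, (g n)⁻¹ * ν' (U ∩ ball x (rr n)) = 1 := by
          filter_upwards [hr0.eventually (gt_mem_nhds hε)] with n hn
          have hsub : ball x (rr n) ⊆ U := (ball_subset_ball hn.le).trans hball
          have : U ∩ ball x (rr n) = ball x (rr n) := inter_eq_self_of_subset_right hsub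
          rw [this, hν' x x₀ (rr n)]
          exact ENNReal.inv_mul_cancel (hgpos n) (hgfin n)
        rw [liminf_congr hev]
        simp
      calc μ' U = ∫⁻ _ in U, 1 ∂μ' := by simp
        _ ≤ ∫⁻ x in U, liminf (fun n => (g n)⁻¹ * ν' (U ∩ ball x (rr n))) atTop ∂μ' := by
            refine lintegral_mono_ae ?_
            filter_upwards [ae_restrict_mem hUopen.measurableSet] with x hx using pt x hx
        _ ≤ liminf (fun n => ∫⁻ x in U, (g n)⁻¹ * ν' (U ∩ ball x (rr n)) ∂μ') atTop :=
            lintegral_liminf_le fun n => (measurable_const.mul (hmeas n))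
    have step2 : ∀ n, ∫⁻ x in U, (g n)⁻¹ * ν' (U ∩ ball x (rr n)) ∂μ' ≤ c * ν' U := by
      intro n
      rw [lintegral_const_mul _ (hmeas n)]
      rw [symm_identity μ' ν' hUopen.measurableSet (rr n)]
      have hb : ∫⁻ y in U, μ' (U ∩ ball y (rr n)) ∂ν' ≤ f n * ν' U := by
        calc ∫⁻ y in U, μ' (U ∩ ball y (rr n)) ∂ν'
            ≤ ∫⁻ _ in U, f n ∂ν' := by
              refine lintegral_mono fun y => ?_
              exact le_trans (measure_mono inter_subset_right) (le_of_eq (hμ' y x₀ (rr n)))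
          _ = f n * ν' U := by simp [lintegral_const]
      calc (g n)⁻¹ * ∫⁻ y in U, μ' (U ∩ ball y (rr n)) ∂ν'
          ≤ (g n)⁻¹ * (f n * ν' U) := mul_le_mul_right hb _
        _ = c * ν' U := by
            rw [hfc n]
            calc (g n)⁻¹ * (c * g n * ν' U) = ((g n)⁻¹ * g n) * (c * ν' U) := by ring
              _ = c * ν' U := by rw [ENNReal.inv_mul_cancel (hgpos n) (hgfin n), one_mul]
    calc μ' U ≤ liminf (fun n => ∫⁻ x in U, (g n)⁻¹ * ν' (U ∩ ball x (rr n)) ∂μ') atTop := step1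
      _ ≤ liminf (fun _ => c * ν' U) atTop := liminf_le_liminf (Eventually.of_forall step2)
      _ = c * ν' U := liminf_const _
  -- combine the two inequalities
  have h1 := main μ ν inferInstance inferInstance hμ hν hμ0 hν0
  have h2 := main ν μ inferInstance inferInstance hν hμ hν0 hμ0
  have hcc : (μ univ / ν univ) * (ν univ / μ univ) = 1 := by
    have i1 : μ univ * (μ univ)⁻¹ = 1 := ENNReal.mul_inv_cancel hμU hμT
    have i2 : ν univ * (ν univ)⁻¹ = 1 := ENNReal.mul_inv_cancel hνU hνT
    calc (μ univ / ν univ) * (ν univ / μ univ)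
        = (μ univ * (μ univ)⁻¹) * (ν univ * (ν univ)⁻¹) := by
          rw [div_eq_mul_inv, div_eq_mul_inv]; ring
      _ = 1 := by rw [i1, i2, one_mul]
  have heq : ∀ U : Set X, IsOpen U → μ U = (μ univ / ν univ) * ν U := by
    intro U hU
    refine le_antisymm (h1 U hU) ?_
    calc (μ univ / ν univ) * ν U ≤ (μ univ / ν univ) * ((ν univ / μ univ) * μ U) :=
          mul_le_mul_right (h2 U hU) _
      _ = ((μ univ / ν univ) * (ν univ / μ univ)) * μ U := by ring
      _ = μ U := by rw [hcc, one_mul]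
  -- extend from open sets to all sets
  haveI : IsFiniteMeasure ((μ univ / ν univ) • ν) := by
    constructor
    rw [Measure.smul_apply, smul_eq_mul]
    exact ENNReal.mul_lt_top (ENNReal.div_lt_top hμT hνU) (measure_lt_top ν univ)
  refine MeasureTheory.ext_of_generate_finite {s : Set X | IsOpen s} ?_ isPiSystem_isOpen
    (fun s hs => by
      rw [Measure.smul_apply, smul_eq_mul]; exact heq s hs) ?_
  · exact BorelSpace.measurable_eq (α := X)
  · rw [Measure.smul_apply, smul_eq_mul]; exact heq univ isOpen_univ


end Abstract

section Norm

variable {E : Type*} [NormedAddCommGroup E] [InnerProductSpace ℝ E]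

lemma hasFDerivAt_norm_ne_zero (x : E) (hx : x ≠ 0) :
    HasFDerivAt (fun y : E => ‖y‖) (‖x‖⁻¹ • (innerSL ℝ x)) x := by
  have hsq : HasFDerivAt (fun y : E => ‖y‖ ^ 2) (2 • (innerSL ℝ x)) x :=
    (hasStrictFDerivAt_norm_sq x).hasFDerivAt
  have hpos : (0 : ℝ) < ‖x‖ ^ 2 := pow_pos (norm_pos_iff.mpr hx) 2
  have hsqrt : HasDerivAt Real.sqrt (1 / (2 * Real.sqrt (‖x‖ ^ 2))) (‖x‖ ^ 2) :=
    Real.hasDerivAt_sqrt hpos.ne'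
  have hcomp := hsqrt.comp_hasFDerivAt x hsq
  rw [show Real.sqrt ∘ (fun y : E => ‖y‖ ^ 2) = fun y : E => ‖y‖ from
    funext fun y => Real.sqrt_sq (norm_nonneg y)] at hcomp
  refine hcomp.congr_fderiv ?_
  have : Real.sqrt (‖x‖ ^ 2) = ‖x‖ := Real.sqrt_sq (norm_nonneg x)
  ext w
  simp only [ContinuousLinearMap.smul_apply, this, ContinuousLinearMap.coe_smul',
    Pi.smul_apply, smul_eq_mul]
  have hn : ‖x‖ ≠ 0 := norm_ne_zero_iff.mpr hx
  push_cast
  field_simp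
  ring

end Norm

section Sphere

variable {E : Type*} [NormedAddCommGroup E] [InnerProductSpace ℝ E]
  [FiniteDimensional ℝ E] [MeasurableSpace E] [BorelSpace E]

lemma exists_isometry_map (x y : E) (h : ‖x‖ = ‖y‖) : ∃ e : E ≃ₗᵢ[ℝ] E, e x = y :=
  ⟨Submodule.reflection (Submodule.span ℝ {x - y})ᗮ, Submodule.reflection_sub h⟩

lemma image_val_ball (x : sphere (0 : E) 1) (r : ℝ) :
    (Subtype.val '' (ball x r) : Set E) = sphere (0 : E) 1 ∩ ball (x : E) r := by
  ext z
  constructor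
  · rintro ⟨w, hw, rfl⟩
    exact ⟨w.2, by simpa [mem_ball, Subtype.dist_eq] using hw⟩
  · rintro ⟨hz, hzb⟩
    exact ⟨⟨z, hz⟩, by simpa [mem_ball, Subtype.dist_eq] using hzb, rfl⟩

lemma isometry_image_sector (e : E ≃ₗᵢ[ℝ] E) (x : E) (hex : ‖x‖ = 1) (r : ℝ) :
    e '' (sphere (0 : E) 1 ∩ ball x r) = sphere (0 : E) 1 ∩ ball (e x) r := by
  ext z
  simp only [mem_image, mem_inter_iff, mem_sphere_zero_iff_norm, mem_ball]
  constructor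
  · rintro ⟨w, ⟨hw1, hw2⟩, rfl⟩
    refine ⟨by rw [e.norm_map]; exact hw1, by rwa [e.dist_map]⟩
  · rintro ⟨hz1, hz2⟩
    refine ⟨e.symm z, ⟨?_, ?_⟩, e.apply_symm_apply z⟩
    · rw [← e.norm_map, e.apply_symm_apply]; exact hz1
    · have := e.symm.dist_map z (e x)
      rw [e.symm_apply_apply] at this
      rwa [← this] at hz2

lemma isometry_image_smul_set (e : E ≃ₗᵢ[ℝ] E) (I : Set ℝ) (A : Set E) :
    e '' (I • A) = I • (e '' A) := by
  ext z
  simp only [mem_image, Set.mem_smul]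
  constructor
  · rintro ⟨w, ⟨t, ht, a, ha, rfl⟩, rfl⟩
    exact ⟨t, ht, e a, ⟨a, ha, rfl⟩, (e.map_smul t a).symm⟩
  · rintro ⟨t, ht, b, ⟨a, ha, rfl⟩, rfl⟩
    exact ⟨t • a, ⟨t, ht, a, ha, rfl⟩, e.map_smul t a⟩

lemma volume_image_isometry (e : E ≃ₗᵢ[ℝ] E) (B : Set E) :
    volume (e '' B) = volume B := by
  have h1 : e '' B = (e.symm : E → E) ⁻¹' B := by
    ext z
    constructor
    · rintro ⟨w, hw, rfl⟩; simpa [e.symm_apply_apply] using hw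
    · intro hz; exact ⟨e.symm z, hz, e.apply_symm_apply z⟩
  have hEmb : MeasurableEmbedding (e.symm : E → E) :=
    e.symm.toHomeomorph.measurableEmbedding
  rw [h1, ← hEmb.map_apply, (e.symm.measurePreserving).map_eq]

/-- uniform distribution of the Hausdorff measure restricted to the sphere -/
lemma hausdorff_comap_ball_eq (s : ℝ) (hs : 0 ≤ s) (x y : sphere (0 : E) 1) (r : ℝ) :
    (μH[s].comap (Subtype.val : sphere (0 : E) 1 → E)) (ball x r) =
      (μH[s].comap (Subtype.val : sphere (0 : E) 1 → E)) (ball y r) := by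
  have hemb : MeasurableEmbedding (Subtype.val : sphere (0 : E) 1 → E) :=
    MeasurableEmbedding.subtype_coe isClosed_sphere.measurableSet
  rw [hemb.comap_apply, hemb.comap_apply, image_val_ball, image_val_ball]
  obtain ⟨e, he⟩ := exists_isometry_map (x : E) (y : E)
    (by rw [mem_sphere_zero_iff_norm.mp x.2, mem_sphere_zero_iff_norm.mp y.2])
  have him := isometry_image_sector e (x : E) (mem_sphere_zero_iff_norm.mp x.2) r
  rw [he] at him
  rw [← him, e.isometry.hausdorffMeasure_image (Or.inl hs)]

/-- uniform distribution of the `toSphere` measure -/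
lemma toSphere_ball_eq (x y : sphere (0 : E) 1) (r : ℝ) :
    volume.toSphere (ball x r) = volume.toSphere (ball y r) := by
  rw [Measure.toSphere_apply' _ measurableSet_ball,
    Measure.toSphere_apply' _ measurableSet_ball, image_val_ball, image_val_ball]
  obtain ⟨e, he⟩ := exists_isometry_map (x : E) (y : E)
    (by rw [mem_sphere_zero_iff_norm.mp x.2, mem_sphere_zero_iff_norm.mp y.2])
  have him := isometry_image_sector e (x : E) (mem_sphere_zero_iff_norm.mp x.2) r
  rw [he] at him
  congr 1
  rw [← him, ← isometry_image_smul_set, volume_image_isometry]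


end Sphere

end SphereAux

namespace SphereAux2

open SphereAux

variable {d : ℕ}

local notation "E" => EuclideanSpace ℝ (Fin d)

lemma fderiv_homog (G : EuclideanSpace ℝ (Fin d) → ℝ)
    (hhom : ∀ (t : ℝ), 0 < t → ∀ x : EuclideanSpace ℝ (Fin d), x ≠ 0 →
      G (t • x) = t ^ (-((d : ℝ) - 1)) * G x)
    (hC1 : ContDiffOn ℝ 1 G {(0 : EuclideanSpace ℝ (Fin d))}ᶜ)
    {t : ℝ} (ht : 0 < t) {x : E} (hx : x ≠ 0) (v : E) :
    fderiv ℝ G (t • x) v = t ^ (-((d : ℝ) - 1)) * t⁻¹ * fderiv ℝ G x v := by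
  have hGdiff : ∀ z : E, z ≠ 0 → DifferentiableAt ℝ G z := fun z hz =>
    (hC1.contDiffAt (isOpen_compl_singleton.mem_nhds hz)).differentiableAt one_ne_zero
  have hxt : t • x ≠ 0 := smul_ne_zero ht.ne' hx
  have hsm : HasFDerivAt (fun y : E => t • y) (t • ContinuousLinearMap.id ℝ E) x := by
    have := (t • ContinuousLinearMap.id ℝ E).hasFDerivAt (x := x)
    exact this
  have h1 : HasFDerivAt (fun y : E => G (t • y))
      ((fderiv ℝ G (t • x)).comp (t • ContinuousLinearMap.id ℝ E)) x :=
    ((hGdiff _ hxt).hasFDerivAt).comp x hsm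
  have h2 : HasFDerivAt (fun y : E => t ^ (-((d : ℝ) - 1)) * G y)
      (t ^ (-((d : ℝ) - 1)) • fderiv ℝ G x) x :=
    ((hGdiff x hx).hasFDerivAt).const_mul _
  have heq : (fun y : E => G (t • y)) =ᶠ[nhds x] (fun y : E => t ^ (-((d : ℝ) - 1)) * G y) := by
    filter_upwards [isOpen_compl_singleton.mem_nhds hx] with y hy
    exact hhom t ht y hy
  have h1' : HasFDerivAt (fun y : E => t ^ (-((d : ℝ) - 1)) * G y)
      ((fderiv ℝ G (t • x)).comp (t • ContinuousLinearMap.id ℝ E)) x :=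
    (heq.hasFDerivAt_iff).mp h1
  have huniq := h1'.unique h2
  have := congrFun (congrArg DFunLike.coe huniq) v
  simp only [ContinuousLinearMap.coe_comp', Function.comp_apply,
    ContinuousLinearMap.smul_apply, ContinuousLinearMap.coe_smul', Pi.smul_apply,
    ContinuousLinearMap.coe_id', id_eq, smul_eq_mul, ContinuousLinearMap.map_smul] at this
  -- this : t • fderiv ℝ G (t • x) v = t ^ (-((d:ℝ)-1)) • fderiv ℝ G x v
  have htne : t ≠ 0 := ht.ne'
  field_simp at this ⊢
  linarith [this]


/-- The analytic core: the integral of `∂ᵥ G` over the sphere w.r.t. `volume.toSphere`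
vanishes. -/
lemma integral_toSphere_eq_zero (hd : 2 ≤ d) (G : EuclideanSpace ℝ (Fin d) → ℝ)
    (hhom : ∀ (t : ℝ), 0 < t → ∀ x : EuclideanSpace ℝ (Fin d), x ≠ 0 →
      G (t • x) = t ^ (-((d : ℝ) - 1)) * G x)
    (hC1 : ContDiffOn ℝ 1 G {(0 : EuclideanSpace ℝ (Fin d))}ᶜ) (v : E) :
    ∫ ω : sphere (0 : E) 1, fderiv ℝ G (ω : E) v ∂(volume.toSphere) = 0 := by
  have hdpos : 0 < d := lt_of_lt_of_le two_pos hd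
  haveI : Nonempty (Fin d) := ⟨⟨0, hdpos⟩⟩
  have hdim : Module.finrank ℝ (EuclideanSpace ℝ (Fin d)) = d := finrank_euclideanSpace_fin
  have hGdiff : ∀ z : E, z ≠ 0 → DifferentiableAt ℝ G z := fun z hz =>
    (hC1.contDiffAt (isOpen_compl_singleton.mem_nhds hz)).differentiableAt one_ne_zero
  have hGcont : ContinuousOn G {(0 : E)}ᶜ := hC1.continuousOn
  have hG'cont : ContinuousOn (fun x : E => fderiv ℝ G x) {(0 : E)}ᶜ :=
    hC1.continuousOn_fderiv_of_isOpen isOpen_compl_singleton le_rfl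
  -- the bump function on ℝ
  set b : ContDiffBump ((3:ℝ)/2) := ⟨1/4, 1/2, by norm_num, by norm_num⟩ with hb
  set φ : ℝ → ℝ := fun r => b r with hφ
  have φ_zero : ∀ r : ℝ, r ≤ 1 ∨ 2 ≤ r → φ r = 0 := by
    intro r hr
    refine b.zero_of_le_dist ?_
    rw [Real.dist_eq]
    rcases hr with hr | hr
    · rw [abs_of_nonpos (by linarith)]; simp only [hb]; norm_num; linarith
    · rw [abs_of_nonneg (by linarith)]; simp only [hb]; norm_num; linarith
  have φ_diff : Differentiable ℝ φ := (b.contDiff (n := 1)).differentiable one_ne_zero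
  have φ'_cont : Continuous (deriv φ) := by
    have h := (contDiff_infty_iff_deriv.mp (b.contDiff (n := ⊤))).2
    exact h.continuous
  have φ'_zero : ∀ r : ℝ, r ∉ Icc (1:ℝ) 2 → deriv φ r = 0 := by
    intro r hr
    have hev : φ =ᶠ[nhds r] (fun _ => 0) := by
      filter_upwards [isClosed_Icc.isOpen_compl.mem_nhds hr] with y hy
      refine φ_zero y ?_
      simp only [mem_compl_iff, mem_Icc, not_and_or, not_le] at hy
      rcases hy with hy | hy
      · exact Or.inl hy.le
      · exact Or.inr hy.le
    rw [hev.deriv_eq, deriv_const]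
  -- the space functions
  set F₁ : E → ℝ := fun x => φ ‖x‖ * fderiv ℝ G x v with hF₁
  set F₂ : E → ℝ := fun x => (deriv φ ‖x‖ * (‖x‖⁻¹ * ⟪x, v⟫)) * G x with hF₂
  set h : E → ℝ := fun x => φ ‖x‖ * G x with hh
  -- h vanishes near small points
  have hzero_nbhd : ∀ x : E, ‖x‖ < 1 → h =ᶠ[nhds x] (fun _ => 0) := by
    intro x hx
    have hopen : IsOpen {y : E | ‖y‖ < 1} := isOpen_lt continuous_norm continuous_const
    filter_upwards [hopen.mem_nhds hx] with y hy
    simp only [hh]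
    rw [φ_zero ‖y‖ (Or.inl (le_of_lt hy)), zero_mul]
  -- derivative of h away from zero
  have hhF : ∀ x : E, x ≠ 0 → HasFDerivAt h
      ((φ ‖x‖) • fderiv ℝ G x + (G x) • ((deriv φ ‖x‖) • (‖x‖⁻¹ • innerSL ℝ x))) x := by
    intro x hx
    have hφn : HasFDerivAt (fun y : E => φ ‖y‖) ((deriv φ ‖x‖) • (‖x‖⁻¹ • innerSL ℝ x)) x :=
      (φ_diff ‖x‖).hasDerivAt.comp_hasFDerivAt x (hasFDerivAt_norm_ne_zero x hx)
    exact hφn.mul ((hGdiff x hx).hasFDerivAt)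
  have hhdiff : Differentiable ℝ h := by
    intro x
    rcases lt_or_ge ‖x‖ 1 with hlt | hge
    · exact ((hzero_nbhd x hlt).differentiableAt_iff).mpr (differentiableAt_const 0)
    · have hx : x ≠ 0 := fun hx0 => by simp [hx0] at hge; linarith
      exact (hhF x hx).differentiableAt
  have hfd_eq : ∀ x : E, fderiv ℝ h x v = F₁ x + F₂ x := by
    intro x
    rcases lt_or_ge ‖x‖ 1 with hlt | hge
    · have h1 : fderiv ℝ h x = 0 := by
        rw [(hzero_nbhd x hlt).fderiv_eq]; exact fderiv_const_apply 0
      have h2 : φ ‖x‖ = 0 := φ_zero _ (Or.inl hlt.le)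
      have h3 : deriv φ ‖x‖ = 0 := φ'_zero _ (fun hc => by
        rcases hc with ⟨hc1, _⟩; linarith)
      simp [hF₁, hF₂, h1, h2, h3]
    · have hx : x ≠ 0 := fun hx0 => by simp [hx0] at hge; linarith
      rw [(hhF x hx).fderiv]
      simp only [hF₁, hF₂, ContinuousLinearMap.add_apply, ContinuousLinearMap.smul_apply,
        smul_eq_mul, innerSL_apply_apply]
      ring
  -- continuity and integrability
  have cont_glue : ∀ (w : E → ℝ), ContinuousOn w {(0 : E)}ᶜ →
      (∀ x : E, ‖x‖ < 1 → w x = 0) → Continuous w := by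
    intro w hw h0
    rw [continuous_iff_continuousAt]
    intro x
    rcases lt_or_ge ‖x‖ 1 with hlt | hge
    · have hopen : IsOpen {y : E | ‖y‖ < 1} := isOpen_lt continuous_norm continuous_const
      have hev : w =ᶠ[nhds x] (fun _ => 0) := by
        filter_upwards [hopen.mem_nhds hlt] with y hy using h0 y hy
      exact (continuousAt_congr hev).mpr continuousAt_const
    · have hx : x ≠ 0 := fun hx0 => by simp [hx0] at hge; linarith
      exact hw.continuousAt (isOpen_compl_singleton.mem_nhds hx)
  have supp_cb : ∀ (w : E → ℝ), (∀ x : E, 2 < ‖x‖ → w x = 0) → HasCompactSupport w := by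
    intro w hw
    refine HasCompactSupport.intro (isCompact_closedBall (0 : E) 2) fun x hx => ?_
    exact hw x (by simpa [mem_closedBall, dist_zero_right, not_le] using hx)
  have hF₁cont : Continuous F₁ := by
    refine cont_glue F₁ ?_ ?_
    · refine (((b.continuous).comp continuous_norm).continuousOn).mul ?_
      exact (hG'cont.clm_apply continuousOn_const)
    · intro x hx
      simp only [hF₁]
      rw [φ_zero _ (Or.inl hx.le), zero_mul]
  have hF₂cont : Continuous F₂ := by
    refine cont_glue F₂ ?_ ?_
    · refine ContinuousOn.mul ?_ hGcont
      refine ContinuousOn.mul ((φ'_cont.comp continuous_norm).continuousOn) ?_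
      refine ContinuousOn.mul ?_ ?_
      · exact (continuous_norm.continuousOn).inv₀ fun x hx =>
          norm_ne_zero_iff.mpr (by simpa using hx)
      · exact Continuous.continuousOn (Continuous.inner continuous_id continuous_const)
    · intro x hx
      simp only [hF₂]
      rw [φ'_zero _ (fun hc => by rcases hc with ⟨hc1, _⟩; linarith), zero_mul, zero_mul]
  have hhcont : Continuous h := by
    refine cont_glue h ?_ ?_
    · exact (((b.continuous).comp continuous_norm).continuousOn).mul hGcont
    · intro x hx
      simp only [hh]
      rw [φ_zero _ (Or.inl hx.le), zero_mul]
  have hF₁supp : HasCompactSupport F₁ := supp_cb F₁ fun x hx => by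
    simp only [hF₁]; rw [φ_zero _ (Or.inr hx.le), zero_mul]
  have hF₂supp : HasCompactSupport F₂ := supp_cb F₂ fun x hx => by
    simp only [hF₂]
    rw [φ'_zero _ (fun hc => by rcases hc with ⟨_, hc2⟩; linarith), zero_mul, zero_mul]
  have hhsupp : HasCompactSupport h := supp_cb h fun x hx => by
    simp only [hh]; rw [φ_zero _ (Or.inr hx.le), zero_mul]
  have hF₁int : Integrable F₁ := hF₁cont.integrable_of_hasCompactSupport hF₁supp
  have hF₂int : Integrable F₂ := hF₂cont.integrable_of_hasCompactSupport hF₂supp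
  have hhint : Integrable h := hhcont.integrable_of_hasCompactSupport hhsupp
  -- the cutoff function
  set c2 : ContDiffBump (0 : E) := ⟨3, 4, by norm_num, by norm_num⟩ with hc2
  set χ : E → ℝ := fun x => c2 x with hχ
  have hχdiff : Differentiable ℝ χ := (c2.contDiff (n := 1)).differentiable one_ne_zero
  have hχ1 : ∀ x : E, ‖x‖ ≤ 3 → χ x = 1 := fun x hx =>
    c2.one_of_mem_closedBall (by simpa [mem_closedBall, dist_zero_right] using hx)
  have hright : ∀ x : E, fderiv ℝ χ x v * h x = 0 := by
    intro x
    rcases lt_or_ge ‖x‖ 3 with hlt | hge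
    · have hopen : IsOpen {y : E | ‖y‖ < 3} := isOpen_lt continuous_norm continuous_const
      have hev : χ =ᶠ[nhds x] (fun _ => 1) := by
        filter_upwards [hopen.mem_nhds hlt] with y hy using hχ1 y hy.le
      rw [hev.fderiv_eq, fderiv_const_apply]
      simp
    · have : h x = 0 := by
        simp only [hh]; rw [φ_zero _ (Or.inr (by linarith)), zero_mul]
      rw [this, mul_zero]
  have hleft : ∀ x : E, χ x * fderiv ℝ h x v = fderiv ℝ h x v := by
    intro x
    rcases le_or_gt ‖x‖ 3 with hle | hgt
    · rw [hχ1 x hle, one_mul]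
    · have hopen : IsOpen {y : E | 2 < ‖y‖} := isOpen_lt continuous_const continuous_norm
      have hev : h =ᶠ[nhds x] (fun _ => 0) := by
        filter_upwards [hopen.mem_nhds (by simp only [mem_setOf_eq]; linarith)] with y hy
        simp only [hh]; rw [φ_zero _ (Or.inr hy.le), zero_mul]
      rw [hev.fderiv_eq, fderiv_const_apply]
      simp
  -- integration by parts
  have hIBP : ∫ x : E, χ x * fderiv ℝ h x v = - ∫ x : E, fderiv ℝ χ x v * h x := by
    refine integral_mul_fderiv_eq_neg_fderiv_mul_of_integrable ?_ ?_ ?_ (fun x _ => hχdiff x) (fun x _ => hhdiff x)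
    · rw [show (fun x : E => fderiv ℝ χ x v * h x) = fun _ => (0:ℝ) from funext hright]
      exact integrable_zero _ _ _
    · rw [show (fun x : E => χ x * fderiv ℝ h x v) = fun x => fderiv ℝ h x v from
        funext hleft]
      rw [show (fun x : E => fderiv ℝ h x v) = fun x => F₁ x + F₂ x from funext hfd_eq]
      exact hF₁int.add hF₂int
    · refine hhint.bdd_mul (c := 1) ?_ ?_
      · exact ((c2.continuous).aestronglyMeasurable)
      · exact ae_of_all _ fun x => by
          rw [Real.norm_eq_abs, abs_of_nonneg (c2.nonneg' x)]; exact c2.le_one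
  have hsum : (∫ x : E, F₁ x) + (∫ x : E, F₂ x) = 0 := by
    have h1 : ∫ x : E, χ x * fderiv ℝ h x v = (∫ x : E, F₁ x) + (∫ x : E, F₂ x) := by
      rw [show (fun x : E => χ x * fderiv ℝ h x v) = fun x => F₁ x + F₂ x from
        funext fun x => (hleft x).trans (hfd_eq x)]
      exact integral_add hF₁int hF₂int
    have h2 : ∫ x : E, fderiv ℝ χ x v * h x = 0 := by
      rw [show (fun x : E => fderiv ℝ χ x v * h x) = fun _ => (0:ℝ) from funext hright]
      exact integral_zero _ _
    rw [h1, h2, neg_zero] at hIBP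
    exact hIBP
  -- polar coordinates
  have hpolar : ∀ F : E → ℝ, (∫ x : E, F x) =
      ∫ p : (sphere (0 : E) 1) × (Ioi (0:ℝ)), F (p.2.1 • (p.1 : E))
        ∂(volume.toSphere.prod (Measure.volumeIoiPow (d - 1))) := by
    intro F
    have hmp := (Measure.measurePreserving_homeomorphUnitSphereProd
      (volume : Measure (EuclideanSpace ℝ (Fin d)))).integral_comp
      (Homeomorph.measurableEmbedding _) (fun p : (sphere (0 : E) 1) × (Ioi (0:ℝ)) =>
        F (p.2.1 • (p.1 : E)))
    simp only [hdim] at hmp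
    rw [← hmp]
    have hpt : ∀ x : ({(0:E)}ᶜ : Set (EuclideanSpace ℝ (Fin d))),
        ((homeomorphUnitSphereProd (EuclideanSpace ℝ (Fin d))) x).2.1 •
          ((((homeomorphUnitSphereProd (EuclideanSpace ℝ (Fin d))) x).1 : E)) = (x : E) := by
      intro x
      have h1 := congrArg Subtype.val
        ((homeomorphUnitSphereProd (EuclideanSpace ℝ (Fin d))).symm_apply_apply x)
      rwa [homeomorphUnitSphereProd_symm_apply_coe] at h1
    calc ∫ x : E, F x = ∫ x in {(0:E)}ᶜ, F x := by rw [MeasureTheory.restrict_compl_singleton]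
      _ = ∫ x : ({(0:E)}ᶜ : Set (EuclideanSpace ℝ (Fin d))), F (x : E)
            ∂((volume : Measure (EuclideanSpace ℝ (Fin d))).comap Subtype.val) :=
          (integral_subtype_comap (measurableSet_singleton (0:E)).compl F).symm
      _ = _ := by
          refine integral_congr_ae (ae_of_all _ fun x => ?_)
          exact (congrArg F (hpt x)).symm
  -- the radial integral identity
  have hradial : ∀ (w : ℝ → ℝ), (∫ r : Ioi (0:ℝ), w r.1 ∂(Measure.volumeIoiPow (d - 1))) =
      ∫ r in Ioi (0:ℝ), (r ^ (d-1) : ℝ) • w r := by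
    intro w
    simp only [Measure.volumeIoiPow, ENNReal.ofReal]
    rw [integral_withDensity_eq_integral_smul
      ((measurable_subtype_coe.pow_const _).real_toNNReal),
      integral_subtype_comap measurableSet_Ioi fun a : ℝ => Real.toNNReal (a ^ (d-1)) • w a]
    refine setIntegral_congr_fun measurableSet_Ioi fun x hx => ?_
    rw [NNReal.smul_def, Real.coe_toNNReal _ (pow_nonneg (le_of_lt hx) _)]
  -- basic sphere facts
  have hω : ∀ ω : sphere (0:E) 1, (ω : E) ≠ 0 := fun ω => ne_of_mem_sphere ω.2 one_ne_zero
  have hωnorm : ∀ ω : sphere (0:E) 1, ‖(ω:E)‖ = 1 := fun ω => mem_sphere_zero_iff_norm.mp ω.2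
  have hnorm_smul : ∀ (r : Ioi (0:ℝ)) (ω : sphere (0:E) 1), ‖(r.1 • (ω:E))‖ = r.1 := by
    intro r ω
    rw [norm_smul, hωnorm, mul_one, Real.norm_eq_abs, abs_of_pos r.2]
  have hd1 : (1:ℕ) ≤ d := le_trans one_le_two hd
  have hpow_nat : ∀ r : ℝ, 0 < r → (r : ℝ) ^ (d-1 : ℕ) = r ^ ((d:ℝ) - 1) := by
    intro r hr
    rw [← Real.rpow_natCast r (d-1), Nat.cast_sub hd1, Nat.cast_one]
  -- F₁ in polar form
  have hF₁polar : ∀ (ω : sphere (0:E) 1) (r : Ioi (0:ℝ)),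
      F₁ (r.1 • (ω : E)) = (fderiv ℝ G (ω:E) v) * (φ r.1 * r.1 ^ (-(d:ℝ))) := by
    intro ω r
    have hr : (0:ℝ) < r.1 := r.2
    have key : r.1 ^ (-((d:ℝ)-1)) * r.1⁻¹ = r.1 ^ (-(d:ℝ)) := by
      rw [← Real.rpow_neg_one r.1, ← Real.rpow_add hr]
      congr 1
      ring
    simp only [hF₁]
    rw [hnorm_smul, fderiv_homog G hhom hC1 hr (hω ω) v, ← key]
    ring
  have hF₂polar : ∀ (ω : sphere (0:E) 1) (r : Ioi (0:ℝ)),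
      F₂ (r.1 • (ω : E)) = (⟪(ω:E), v⟫ * G (ω:E)) * (deriv φ r.1 * r.1 ^ (-((d:ℝ)-1))) := by
    intro ω r
    have hr : (0:ℝ) < r.1 := r.2
    simp only [hF₂]
    rw [hnorm_smul, real_inner_smul_left, hhom r.1 hr (ω:E) (hω ω)]
    have hcancel : r.1⁻¹ * (r.1 * ⟪(ω:E), v⟫) = ⟪(ω:E), v⟫ := by
      field_simp
    rw [hcancel]
    ring
  -- the two polar integrals
  have hintF₁ : ∫ x : E, F₁ x =
      (∫ ω : sphere (0:E) 1, fderiv ℝ G (ω:E) v ∂volume.toSphere) *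
        (∫ r in Ioi (0:ℝ), φ r * r⁻¹) := by
    rw [hpolar F₁]
    rw [show (fun p : (sphere (0:E) 1) × (Ioi (0:ℝ)) => F₁ (p.2.1 • (p.1 : E))) =
        fun p => (fderiv ℝ G (p.1:E) v) * (φ p.2.1 * p.2.1 ^ (-(d:ℝ))) from
      funext fun p => hF₁polar p.1 p.2]
    rw [integral_prod_mul (fun ω : sphere (0:E) 1 => fderiv ℝ G (ω:E) v)
      (fun r : Ioi (0:ℝ) => φ r.1 * r.1 ^ (-(d:ℝ)))]
    congr 1
    rw [hradial (fun r => φ r * r ^ (-(d:ℝ)))]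
    refine setIntegral_congr_fun measurableSet_Ioi fun r hr => ?_
    have hr0 : (0:ℝ) < r := hr
    have h2 : r ^ ((d:ℝ)-1) * r ^ (-(d:ℝ)) = r⁻¹ := by
      rw [← Real.rpow_add hr0, show (d:ℝ) - 1 + -(d:ℝ) = -1 by ring, Real.rpow_neg_one]
    rw [smul_eq_mul]
    calc r ^ (d-1:ℕ) * (φ r * r ^ (-(d:ℝ)))
        = φ r * (r ^ ((d:ℝ)-1) * r ^ (-(d:ℝ))) := by rw [hpow_nat r hr0]; ring
      _ = φ r * r⁻¹ := by rw [h2]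
  have hintF₂ : ∫ x : E, F₂ x =
      (∫ ω : sphere (0:E) 1, ⟪(ω:E), v⟫ * G (ω:E) ∂volume.toSphere) *
        (∫ r in Ioi (0:ℝ), deriv φ r) := by
    rw [hpolar F₂]
    rw [show (fun p : (sphere (0:E) 1) × (Ioi (0:ℝ)) => F₂ (p.2.1 • (p.1 : E))) =
        fun p => (⟪(p.1:E), v⟫ * G (p.1:E)) * (deriv φ p.2.1 * p.2.1 ^ (-((d:ℝ)-1))) from
      funext fun p => hF₂polar p.1 p.2]
    rw [integral_prod_mul (fun ω : sphere (0:E) 1 => ⟪(ω:E), v⟫ * G (ω:E))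
      (fun r : Ioi (0:ℝ) => deriv φ r.1 * r.1 ^ (-((d:ℝ)-1)))]
    congr 1
    rw [hradial (fun r => deriv φ r * r ^ (-((d:ℝ)-1)))]
    refine setIntegral_congr_fun measurableSet_Ioi fun r hr => ?_
    have hr0 : (0:ℝ) < r := hr
    have h2 : r ^ ((d:ℝ)-1) * r ^ (-((d:ℝ)-1)) = 1 := by
      rw [← Real.rpow_add hr0, show (d:ℝ) - 1 + -((d:ℝ)-1) = 0 by ring, Real.rpow_zero]
    rw [smul_eq_mul]
    calc r ^ (d-1:ℕ) * (deriv φ r * r ^ (-((d:ℝ)-1)))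
        = deriv φ r * (r ^ ((d:ℝ)-1) * r ^ (-((d:ℝ)-1))) := by rw [hpow_nat r hr0]; ring
      _ = deriv φ r := by rw [h2, mul_one]
  -- the derivative integral vanishes
  have hφ'supp : HasCompactSupport (deriv φ) :=
    HasCompactSupport.intro isCompact_Icc fun r hr => φ'_zero r hr
  have hφ'int : Integrable (deriv φ) := φ'_cont.integrable_of_hasCompactSupport hφ'supp
  have hderiv_int : ∫ r in Ioi (0:ℝ), deriv φ r = 0 := by
    have hsplitIoi : Ioc (0:ℝ) 3 ∪ Ioi 3 = Ioi 0 := Ioc_union_Ioi_eq_Ioi (by norm_num)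
    rw [← hsplitIoi, setIntegral_union (Ioc_disjoint_Ioi le_rfl) measurableSet_Ioi
      hφ'int.integrableOn hφ'int.integrableOn]
    have hIoi3 : ∫ r in Ioi (3:ℝ), deriv φ r = 0 := by
      rw [setIntegral_congr_fun measurableSet_Ioi
        (fun r (hr : r ∈ Ioi (3:ℝ)) => φ'_zero r fun hc => by
          have h3 : (3:ℝ) < r := hr
          have := hc.2
          linarith)]
      simp
    have hIoc : ∫ r in Ioc (0:ℝ) 3, deriv φ r = φ 3 - φ 0 := by
      rw [← intervalIntegral.integral_of_le (by norm_num : (0:ℝ) ≤ 3)]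
      exact intervalIntegral.integral_deriv_eq_sub (fun x _ => φ_diff x)
        (φ'_cont.intervalIntegrable 0 3)
    rw [hIoi3, hIoc, φ_zero 3 (Or.inr (by norm_num)), φ_zero 0 (Or.inl (by norm_num))]
    ring
  -- positivity of the radial weight integral
  have hI₁pos : 0 < ∫ r in Ioi (0:ℝ), φ r * r⁻¹ := by
    set q : ℝ → ℝ := fun r => φ r * r⁻¹ with hq
    have hqcont : Continuous q := by
      rw [continuous_iff_continuousAt]
      intro r
      rcases eq_or_ne r 0 with rfl | hr
      · have hopen : IsOpen (Iio (1:ℝ)) := isOpen_Iio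
        have hev : q =ᶠ[nhds (0:ℝ)] (fun _ => 0) := by
          filter_upwards [hopen.mem_nhds (by norm_num : (0:ℝ) ∈ Iio 1)] with y hy
          simp only [hq]
          rw [φ_zero y (Or.inl (le_of_lt hy)), zero_mul]
        exact (continuousAt_congr hev).mpr continuousAt_const
      · exact (b.continuous.continuousAt).mul (continuousAt_inv₀ hr)
    have hqsupp : HasCompactSupport q := by
      refine HasCompactSupport.intro (isCompact_Icc (a := (1:ℝ)) (b := 2)) fun r hr => ?_
      simp only [hq]
      have : r ≤ 1 ∨ 2 ≤ r := by
        simp only [mem_Icc, not_and_or, not_le] at hr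
        rcases hr with h | h
        exacts [Or.inl h.le, Or.inr h.le]
      rw [φ_zero r this, zero_mul]
    have hqint : Integrable q := hqcont.integrable_of_hasCompactSupport hqsupp
    have hnonneg : 0 ≤ᵐ[volume.restrict (Ioi (0:ℝ))] q := by
      filter_upwards [ae_restrict_mem measurableSet_Ioi] with r hr
      exact mul_nonneg (b.nonneg) (inv_nonneg.mpr (le_of_lt hr))
    rw [setIntegral_pos_iff_support_of_nonneg_ae hnonneg hqint.integrableOn]
    have hsub : Ioo (5/4 : ℝ) (7/4) ⊆ Function.support q ∩ Ioi 0 := by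
      intro r hr
      have hr1 : (5/4:ℝ) < r := hr.1
      have hr2 : r < (7/4:ℝ) := hr.2
      have hrpos : (0:ℝ) < r := by linarith
      constructor
      · have hone : φ r = 1 := b.one_of_mem_closedBall (by
          rw [mem_closedBall, Real.dist_eq]
          rw [abs_le]
          constructor <;> [skip; skip] <;> simp only [hb] <;> norm_num <;> linarith)
        simp only [hq, Function.mem_support, hone, one_mul]
        exact inv_ne_zero hrpos.ne'
      · exact hrpos
    refine lt_of_lt_of_le ?_ (measure_mono hsub)
    rw [Real.volume_Ioo]
    refine ENNReal.ofReal_pos.mpr (by norm_num)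
  -- conclusion
  rw [hintF₁, hintF₂, hderiv_int, mul_zero, add_zero] at hsum
  rcases mul_eq_zero.mp hsum with hA | hI
  · exact hA
  · exact absurd hI (ne_of_gt hI₁pos)


end SphereAux2

open SphereAux SphereAux2

/-- if `G` is homogeneous of degree `-(d-1)` and `C¹` off the origin, then the
integral of each partial derivative `∂ᵢ G` over the unit sphere vanishes. -/
theorem sphere_integral_partial_deriv_eq_zero
    (d : ℕ) (hd : 2 ≤ d) (G : EuclideanSpace ℝ (Fin d) → ℝ)
    (hhom : ∀ (t : ℝ), 0 < t → ∀ x : EuclideanSpace ℝ (Fin d), x ≠ 0 →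
      G (t • x) = t ^ (-((d : ℝ) - 1)) * G x)
    (hC1 : ContDiffOn ℝ 1 G {(0 : EuclideanSpace ℝ (Fin d))}ᶜ) :
    ∀ i : Fin d,
      ∫ ξ in {ξ : EuclideanSpace ℝ (Fin d) | ‖ξ‖ = 1},
        fderiv ℝ G ξ (EuclideanSpace.single i 1) ∂(μH[(d : ℝ) - 1]) = 0 := by
  intro i
  have hdpos : 0 < d := lt_of_lt_of_le two_pos hd
  haveI : Nonempty (Fin d) := ⟨⟨0, hdpos⟩⟩
  set v : EuclideanSpace ℝ (Fin d) := EuclideanSpace.single i 1 with hv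
  set f : EuclideanSpace ℝ (Fin d) → ℝ := fun ξ => fderiv ℝ G ξ v with hf
  -- the set is the sphere
  have hset : {ξ : EuclideanSpace ℝ (Fin d) | ‖ξ‖ = 1} = sphere (0 : EuclideanSpace ℝ (Fin d)) 1 := by
    ext ξ
    simp [mem_sphere_zero_iff_norm]
  rw [hset]
  -- convert to an integral over the subtype
  have hsphere_meas : MeasurableSet (sphere (0 : EuclideanSpace ℝ (Fin d)) 1) :=
    isClosed_sphere.measurableSet
  set σS : Measure (sphere (0 : EuclideanSpace ℝ (Fin d)) 1) :=
    (μH[(d : ℝ) - 1]).comap Subtype.val with hσS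
  rw [← integral_subtype_comap hsphere_meas f]
  have hemb : MeasurableEmbedding (Subtype.val : sphere (0 : EuclideanSpace ℝ (Fin d)) 1 →
      EuclideanSpace ℝ (Fin d)) := MeasurableEmbedding.subtype_coe hsphere_meas
  have hs_exp : (0:ℝ) ≤ (d : ℝ) - 1 := by
    have : (2:ℝ) ≤ (d:ℝ) := by exact_mod_cast hd
    linarith
  have hσunif : ∀ (x y : sphere (0 : EuclideanSpace ℝ (Fin d)) 1) (r : ℝ),
      σS (ball x r) = σS (ball y r) := fun x y r =>
    hausdorff_comap_ball_eq ((d : ℝ) - 1) hs_exp x y r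
  -- continuity of the integrand on the sphere
  have hω : ∀ ω : sphere (0 : EuclideanSpace ℝ (Fin d)) 1, (ω : EuclideanSpace ℝ (Fin d)) ≠ 0 :=
    fun ω => ne_of_mem_sphere ω.2 one_ne_zero
  have hG'cont : ContinuousOn (fun x : EuclideanSpace ℝ (Fin d) => fderiv ℝ G x)
      {(0 : EuclideanSpace ℝ (Fin d))}ᶜ :=
    hC1.continuousOn_fderiv_of_isOpen isOpen_compl_singleton le_rfl
  have hfcont : Continuous fun x : sphere (0 : EuclideanSpace ℝ (Fin d)) 1 => f (x : EuclideanSpace ℝ (Fin d)) := by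
    refine ContinuousOn.comp_continuous (hG'cont.clm_apply continuousOn_const)
      continuous_subtype_val fun x => ?_
    exact hω x
  -- case analysis on the total mass of σS
  rcases eq_or_ne (σS univ) 0 with hzero | hne0
  · -- measure zero
    rw [show (∫ x : sphere (0 : EuclideanSpace ℝ (Fin d)) 1,
        f (x : EuclideanSpace ℝ (Fin d)) ∂σS) =
      ∫ x : sphere (0 : EuclideanSpace ℝ (Fin d)) 1, f (x : EuclideanSpace ℝ (Fin d))
        ∂(0 : Measure (sphere (0 : EuclideanSpace ℝ (Fin d)) 1)) from by
        rw [Measure.measure_univ_eq_zero.mp hzero]]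
    exact integral_zero_measure _
  rcases eq_or_ne (σS univ) ∞ with hinf | hfin
  · -- infinite measure: the integrand must vanish identically, or be non-integrable
    have hballinf : ∀ (x : sphere (0 : EuclideanSpace ℝ (Fin d)) 1) (r : ℝ), 0 < r →
        σS (ball x r) = ∞ := by
      intro x r hr
      rcases eq_top_or_lt_top (σS (ball x r)) with h | h
      · exact h
      exfalso
      obtain ⟨t, ht⟩ := isCompact_univ.elim_finite_subcover
        (fun y : sphere (0 : EuclideanSpace ℝ (Fin d)) 1 => ball y r)
        (fun y => isOpen_ball) (fun y _ => mem_iUnion.2 ⟨y, mem_ball_self hr⟩)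
      have hbound : σS univ ≤ ∑ y ∈ t, σS (ball y r) :=
        le_trans (measure_mono ht) (measure_biUnion_finset_le t _)
      have heach : ∀ y ∈ t, σS (ball y r) = σS (ball x r) := fun y _ => hσunif y x r
      rw [Finset.sum_congr rfl heach, Finset.sum_const, hinf] at hbound
      have : (t.card : ℝ≥0∞) * σS (ball x r) < ∞ :=
        ENNReal.mul_lt_top (ENNReal.natCast_lt_top _) h
      rw [nsmul_eq_mul] at hbound
      exact absurd (lt_of_le_of_lt hbound this) (lt_irrefl _)
    by_cases hint : Integrable (fun x : sphere (0 : EuclideanSpace ℝ (Fin d)) 1 =>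
        f (x : EuclideanSpace ℝ (Fin d))) σS
    · have hall : ∀ ξ : sphere (0 : EuclideanSpace ℝ (Fin d)) 1,
          f (ξ : EuclideanSpace ℝ (Fin d)) = 0 := by
        intro ξ₀
        by_contra hne
        set ε : ℝ := |f (ξ₀ : EuclideanSpace ℝ (Fin d))| / 2 with hε
        have hεpos : 0 < ε := by
          have : 0 < |f (ξ₀ : EuclideanSpace ℝ (Fin d))| := abs_pos.mpr hne
          simp only [hε]; linarith
        have hopen : IsOpen {x : sphere (0 : EuclideanSpace ℝ (Fin d)) 1 |
            ε < |f (x : EuclideanSpace ℝ (Fin d))|} :=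
          isOpen_lt continuous_const hfcont.abs
        have hmem : ξ₀ ∈ {x : sphere (0 : EuclideanSpace ℝ (Fin d)) 1 |
            ε < |f (x : EuclideanSpace ℝ (Fin d))|} := by
          simp only [mem_setOf_eq, hε]
          have : 0 < |f (ξ₀ : EuclideanSpace ℝ (Fin d))| := abs_pos.mpr hne
          linarith
        obtain ⟨δ, hδpos, hδsub⟩ := Metric.isOpen_iff.mp hopen ξ₀ hmem
        have hlb : ENNReal.ofReal ε * σS (ball ξ₀ δ) ≤
            ∫⁻ x, ‖f (x : EuclideanSpace ℝ (Fin d))‖₊ ∂σS := by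
          calc ENNReal.ofReal ε * σS (ball ξ₀ δ)
              = ∫⁻ _ in ball ξ₀ δ, ENNReal.ofReal ε ∂σS := by
                rw [setLIntegral_const, mul_comm]
            _ ≤ ∫⁻ x in ball ξ₀ δ, ‖f (x : EuclideanSpace ℝ (Fin d))‖₊ ∂σS := by
                refine setLIntegral_mono' measurableSet_ball fun x hx => ?_
                have hgt : ε < |f (x : EuclideanSpace ℝ (Fin d))| := hδsub hx
                rw [← enorm_eq_nnnorm, Real.enorm_eq_ofReal_abs]
                exact ENNReal.ofReal_le_ofReal hgt.le
            _ ≤ ∫⁻ x, ‖f (x : EuclideanSpace ℝ (Fin d))‖₊ ∂σS :=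
                setLIntegral_le_lintegral _ _
        rw [hballinf ξ₀ δ hδpos, ENNReal.mul_top (by
          simpa using (ENNReal.ofReal_pos.mpr hεpos).ne')] at hlb
        have h2' : ∫⁻ x, (‖f (x : EuclideanSpace ℝ (Fin d))‖₊ : ℝ≥0∞) ∂σS < ⊤ := hint.2
        exact lt_irrefl ⊤ (lt_of_le_of_lt hlb h2')
      rw [show (fun x : sphere (0 : EuclideanSpace ℝ (Fin d)) 1 =>
          f (x : EuclideanSpace ℝ (Fin d))) = fun _ => (0:ℝ) from funext hall]
      simp
    · exact integral_undef hint
  · -- finite positive measure: use uniqueness of uniformly distributed measures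
    haveI : IsFiniteMeasure σS := ⟨lt_of_le_of_ne le_top hfin⟩
    set ν : Measure (sphere (0 : EuclideanSpace ℝ (Fin d)) 1) := volume.toSphere with hν
    have hνunif : ∀ (x y : sphere (0 : EuclideanSpace ℝ (Fin d)) 1) (r : ℝ),
        ν (ball x r) = ν (ball y r) := fun x y r => toSphere_ball_eq x y r
    have hσ0 : σS ≠ 0 := fun h => hne0 (by rw [h]; simp)
    have hν0 : ν ≠ 0 := by
      intro h
      have h1 : ν univ = 0 := by rw [h]; simp
      rw [hν, Measure.toSphere_apply_univ] at h1
      have h2 : (0:ℝ≥0∞) < volume (ball (0 : EuclideanSpace ℝ (Fin d)) 1) :=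
        measure_ball_pos _ _ one_pos
      have h3 : (Module.finrank ℝ (EuclideanSpace ℝ (Fin d)) : ℝ≥0∞) ≠ 0 := by
        rw [finrank_euclideanSpace_fin]
        exact_mod_cast hdpos.ne'
      exact absurd h1 (by
        refine mul_ne_zero h3 h2.ne')
    have hprop := measure_eq_smul σS ν hσunif hνunif hσ0 hν0
    rw [← hσS, hprop, integral_smul_measure]
    rw [integral_toSphere_eq_zero hd G hhom hC1 v]
    simp
end

section
/- The d×d matrix M with entries M_{ij} = ∫_{|ξ|=1} ξ_i² ξ_j² dσ(ξ) is positive definite; in particular it is invertible. -/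
open MeasureTheory Metric Set Matrix

namespace MomentAux

variable {n : ℕ}

noncomputable def proj (i : Fin (n+1)) (ξ : EuclideanSpace ℝ (Fin (n+1))) :
    EuclideanSpace ℝ (Fin n) := WithLp.toLp 2 (fun j => ξ (i.succAbove j))

noncomputable def graphMap (i : Fin (n+1)) (s : ℝ) (y : EuclideanSpace ℝ (Fin n)) :
    EuclideanSpace ℝ (Fin (n+1)) := WithLp.toLp 2 (i.insertNth (s * Real.sqrt (1 - ‖y‖^2)) (WithLp.ofLp y))

lemma euclid_sq_norm {m : ℕ} (y : EuclideanSpace ℝ (Fin m)) : ‖y‖^2 = ∑ j, (y j)^2 := by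
  rw [EuclideanSpace.norm_eq, Real.sq_sqrt (by positivity)]
  simp [Real.norm_eq_abs, sq_abs]

lemma sq_norm_split (i : Fin (n+1)) (ξ : EuclideanSpace ℝ (Fin (n+1))) :
    ‖ξ‖^2 = (ξ i)^2 + ∑ j, (ξ (i.succAbove j))^2 := by
  rw [euclid_sq_norm, Fin.sum_univ_succAbove (fun k => (ξ k)^2) i]

lemma sq_norm_proj (i : Fin (n+1)) (ξ : EuclideanSpace ℝ (Fin (n+1))) :
    ‖proj i ξ‖^2 = ‖ξ‖^2 - (ξ i)^2 := by
  rw [euclid_sq_norm (proj i ξ), sq_norm_split i ξ]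
  simp [proj]

lemma proj_lipschitz (i : Fin (n+1)) : LipschitzWith 1 (proj (n := n) i) := by
  apply LipschitzWith.of_dist_le_mul
  intro ξ η
  rw [NNReal.coe_one, one_mul, EuclideanSpace.dist_eq, EuclideanSpace.dist_eq]
  apply Real.sqrt_le_sqrt
  rw [Fin.sum_univ_succAbove (fun k => dist (ξ k) (η k)^2) i]
  have : (0:ℝ) ≤ dist (ξ i) (η i)^2 := sq_nonneg _
  simp only [proj, PiLp.toLp_apply]
  linarith

@[simp] lemma graphMap_apply_same (i : Fin (n+1)) (s : ℝ) (y : EuclideanSpace ℝ (Fin n)) :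
    graphMap i s y i = s * Real.sqrt (1 - ‖y‖^2) := by
  simp [graphMap]

@[simp] lemma graphMap_apply_succAbove (i : Fin (n+1)) (s : ℝ) (y : EuclideanSpace ℝ (Fin n))
    (j : Fin n) : graphMap i s y (i.succAbove j) = y j := by
  simp [graphMap]

lemma proj_graphMap (i : Fin (n+1)) (s : ℝ) (y : EuclideanSpace ℝ (Fin n)) :
    proj i (graphMap i s y) = y := PiLp.ext fun j => graphMap_apply_succAbove i s y j

lemma norm_graphMap (i : Fin (n+1)) {s : ℝ} (hs : s^2 = 1) {y : EuclideanSpace ℝ (Fin n)}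
    (hy : ‖y‖^2 ≤ 1) : ‖graphMap i s y‖ = 1 := by
  have h1 : ‖graphMap i s y‖^2 = 1 := by
    rw [sq_norm_split i]
    have hsum : ∑ j, (graphMap i s y (i.succAbove j))^2 = ‖y‖^2 := by
      rw [euclid_sq_norm y]
      simp
    rw [hsum, graphMap_apply_same, mul_pow, hs,
      Real.sq_sqrt (by linarith)]
    ring
  have h0 : 0 ≤ ‖graphMap i s y‖ := norm_nonneg _
  nlinarith

/-- reconstruction of a sphere point from its projection -/
lemma graphMap_proj (i : Fin (n+1)) {ξ : EuclideanSpace ℝ (Fin (n+1))} (hξ : ‖ξ‖ = 1)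
    {s : ℝ} (hs : s * |ξ i| = ξ i) :
    graphMap i s (proj i ξ) = ξ := by
  ext k
  rcases eq_or_ne k i with hk | hk
  · rw [hk, graphMap_apply_same]
    have h1 : 1 - ‖proj i ξ‖^2 = (ξ i)^2 := by
      rw [sq_norm_proj, hξ]; ring
    rw [h1, Real.sqrt_sq_eq_abs, hs]
  · obtain ⟨j, rfl⟩ := Fin.exists_succAbove_eq hk
    rw [graphMap_apply_succAbove]
    rfl

/-- Lipschitz estimate for the square-root part. -/
lemma sqrt_part_lip {c : ℝ} (hc : 0 < c) {y y' : EuclideanSpace ℝ (Fin n)}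
    (hy : ‖y‖^2 ≤ 1 - c) (hy' : ‖y'‖^2 ≤ 1 - c) :
    |Real.sqrt (1 - ‖y‖^2) - Real.sqrt (1 - ‖y'‖^2)| ≤ (1 / Real.sqrt c) * dist y y' := by
  set u := Real.sqrt (1 - ‖y‖^2) with hu
  set v := Real.sqrt (1 - ‖y'‖^2) with hv
  have hu2 : u^2 = 1 - ‖y‖^2 := Real.sq_sqrt (by nlinarith)
  have hv2 : v^2 = 1 - ‖y'‖^2 := Real.sq_sqrt (by nlinarith)
  have hcu : Real.sqrt c ≤ u := Real.sqrt_le_sqrt (by linarith)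
  have hcv : Real.sqrt c ≤ v := Real.sqrt_le_sqrt (by linarith)
  have hcpos : 0 < Real.sqrt c := Real.sqrt_pos.mpr hc
  have hyn : ‖y‖ ≤ 1 := by nlinarith [norm_nonneg y]
  have hy'n : ‖y'‖ ≤ 1 := by nlinarith [norm_nonneg y']
  have hdist : |‖y‖ - ‖y'‖| ≤ dist y y' := abs_norm_sub_norm_le y y'
  have key : |u - v| * (u + v) = |‖y'‖^2 - ‖y‖^2| := by
    have : |u - v| * |u + v| = |u^2 - v^2| := by
      rw [← abs_mul]; ring_nf
    rw [abs_of_nonneg (by linarith : (0:ℝ) ≤ u + v)] at this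
    rw [this, hu2, hv2]
    congr 1; ring
  have hbd : |‖y'‖^2 - ‖y‖^2| ≤ 2 * dist y y' := by
    have heq : |‖y'‖^2 - ‖y‖^2| = |‖y'‖ - ‖y‖| * (‖y'‖ + ‖y‖) := by
      rw [show ‖y'‖^2 - ‖y‖^2 = (‖y'‖ - ‖y‖) * (‖y'‖ + ‖y‖) by ring, abs_mul,
        abs_of_nonneg (by positivity : (0:ℝ) ≤ ‖y'‖ + ‖y‖)]
    rw [heq]
    have h1 : |‖y'‖ - ‖y‖| ≤ dist y y' := by rwa [abs_sub_comm] at hdist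
    nlinarith [abs_nonneg (‖y'‖ - ‖y‖), dist_nonneg (x := y) (y := y'), norm_nonneg y, norm_nonneg y']
  have habs : 0 ≤ |u - v| := abs_nonneg _
  rw [div_mul_eq_mul_div, le_div_iff₀ hcpos]
  nlinarith [dist_nonneg (x := y) (y := y')]

lemma graphMap_lipschitzOn (i : Fin (n+1)) {s : ℝ} (hs : |s| ≤ 1) {c : ℝ} (hc : 0 < c) :
    LipschitzOnWith ((1 / Real.sqrt c + 1).toNNReal) (graphMap i s)
      {y : EuclideanSpace ℝ (Fin n) | ‖y‖^2 ≤ 1 - c} := by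
  rw [lipschitzOnWith_iff_dist_le_mul]
  intro y hy y' hy'
  simp only [mem_setOf_eq] at hy hy'
  have hcpos : 0 < Real.sqrt c := Real.sqrt_pos.mpr hc
  have hK : ((1 / Real.sqrt c + 1).toNNReal : ℝ) = 1 / Real.sqrt c + 1 :=
    Real.coe_toNNReal _ (by positivity)
  rw [hK]
  have hsq : dist (graphMap i s y) (graphMap i s y')^2
      = (s * Real.sqrt (1 - ‖y‖^2) - s * Real.sqrt (1 - ‖y'‖^2))^2 + dist y y'^2 := by
    rw [EuclideanSpace.dist_eq, Real.sq_sqrt (by positivity),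
      Fin.sum_univ_succAbove (fun k => dist (graphMap i s y k) (graphMap i s y' k)^2) i]
    simp only [graphMap_apply_same, graphMap_apply_succAbove]
    rw [EuclideanSpace.dist_eq, Real.sq_sqrt (by positivity)]
    rw [Real.dist_eq]
    congr 1
    rw [sq_abs]
  have hlip := sqrt_part_lip hc hy hy'
  have h2 : |s * Real.sqrt (1 - ‖y‖^2) - s * Real.sqrt (1 - ‖y'‖^2)|
      ≤ (1 / Real.sqrt c) * dist y y' := by
    rw [← mul_sub, abs_mul]
    calc |s| * |Real.sqrt (1 - ‖y‖^2) - Real.sqrt (1 - ‖y'‖^2)|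
        ≤ 1 * |Real.sqrt (1 - ‖y‖^2) - Real.sqrt (1 - ‖y'‖^2)| := by
          apply mul_le_mul_of_nonneg_right hs (abs_nonneg _)
      _ ≤ (1 / Real.sqrt c) * dist y y' := by rw [one_mul]; exact hlip
  have hd0 : 0 ≤ dist (graphMap i s y) (graphMap i s y') := dist_nonneg
  have hrhs0 : 0 ≤ (1 / Real.sqrt c + 1) * dist y y' := by positivity
  have hsqle : dist (graphMap i s y) (graphMap i s y')^2
      ≤ ((1 / Real.sqrt c + 1) * dist y y')^2 := by
    rw [hsq]
    nlinarith [sq_abs (s * Real.sqrt (1 - ‖y‖^2) - s * Real.sqrt (1 - ‖y'‖^2)),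
      dist_nonneg (x := y) (y := y'),
      abs_nonneg (s * Real.sqrt (1 - ‖y‖^2) - s * Real.sqrt (1 - ‖y'‖^2))]
  calc dist (graphMap i s y) (graphMap i s y')
      = Real.sqrt (dist (graphMap i s y) (graphMap i s y')^2) := (Real.sqrt_sq hd0).symm
    _ ≤ Real.sqrt (((1 / Real.sqrt c + 1) * dist y y')^2) := Real.sqrt_le_sqrt hsqle
    _ = (1 / Real.sqrt c + 1) * dist y y' := Real.sqrt_sq hrhs0


open Finset in
lemma exists_big_coord {ξ : EuclideanSpace ℝ (Fin (n+1))} (hξ : ‖ξ‖ = 1) :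
    ∃ i, 1/(n+1:ℝ) ≤ (ξ i)^2 := by
  by_contra hcon
  push_neg at hcon
  have hlt := Finset.sum_lt_sum_of_nonempty (univ_nonempty (α := Fin (n+1)))
    (fun i (_ : i ∈ Finset.univ) => hcon i)
  have hsum : ∑ i, (ξ i)^2 = 1 := by
    rw [← euclid_sq_norm ξ, hξ]; norm_num
  rw [hsum, Finset.sum_const, card_univ, Fintype.card_fin, nsmul_eq_mul] at hlt
  have hpos : (0:ℝ) < (n:ℝ)+1 := by positivity
  have hone : ((n:ℝ)+1) * (1/((n:ℝ)+1)) = 1 := by field_simp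
  push_cast at hlt
  rw [mul_one_div, div_self (ne_of_gt hpos)] at hlt
  exact lt_irrefl _ hlt

lemma haarF : (μH[(n:ℝ)] : Measure (EuclideanSpace ℝ (Fin n))).IsAddHaarMeasure := by
  have h : ((n:ℝ)) = ((Module.finrank ℝ (EuclideanSpace ℝ (Fin n)) : ℕ) : ℝ) := by
    rw [finrank_euclideanSpace_fin]
  rw [h]; infer_instance

lemma ballSet_compact {c : ℝ} (hc : 0 < c) :
    IsCompact {y : EuclideanSpace ℝ (Fin n) | ‖y‖^2 ≤ 1 - c} := by
  rw [Metric.isCompact_iff_isClosed_bounded]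
  constructor
  · exact isClosed_Iic.preimage ((continuous_norm).pow 2)
  · apply (Metric.isBounded_closedBall (x := (0:EuclideanSpace ℝ (Fin n))) (r := 1)).subset
    intro y hy
    simp only [mem_setOf_eq] at hy
    simp only [Metric.mem_closedBall, dist_zero_right]
    nlinarith [norm_nonneg y]

lemma sphere_measure_lt_top (n : ℕ) :
    μH[(n:ℝ)] {ξ : EuclideanSpace ℝ (Fin (n+1)) | ‖ξ‖ = 1} < ⊤ := by
  haveI := haarF (n := n)
  set c : ℝ := 1/(n+1:ℝ) with hcdef
  have hc : 0 < c := by positivity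
  set B : Set (EuclideanSpace ℝ (Fin n)) := {y | ‖y‖^2 ≤ 1 - c} with hBdef
  have hcover : {ξ : EuclideanSpace ℝ (Fin (n+1)) | ‖ξ‖ = 1} ⊆
      ⋃ i : Fin (n+1), (graphMap i 1 '' B ∪ graphMap i (-1) '' B) := by
    intro ξ hξ
    simp only [mem_setOf_eq] at hξ
    obtain ⟨i, hi⟩ := exists_big_coord hξ
    have hyB : proj i ξ ∈ B := by
      simp only [hBdef, mem_setOf_eq, sq_norm_proj, hξ]
      nlinarith
    rcases le_or_gt 0 (ξ i) with hpos | hneg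
    · refine mem_iUnion.mpr ⟨i, Or.inl ⟨proj i ξ, hyB, ?_⟩⟩
      exact graphMap_proj i hξ (by rw [abs_of_nonneg hpos, one_mul])
    · refine mem_iUnion.mpr ⟨i, Or.inr ⟨proj i ξ, hyB, ?_⟩⟩
      exact graphMap_proj i hξ (by rw [abs_of_neg hneg]; ring)
  have hB : μH[(n:ℝ)] B < ⊤ := (ballSet_compact hc).measure_lt_top
  have himg : ∀ (i : Fin (n+1)) (s : ℝ), |s| ≤ 1 → μH[(n:ℝ)] (graphMap i s '' B) < ⊤ := by
    intro i s hs
    refine lt_of_le_of_lt ((graphMap_lipschitzOn i hs hc).hausdorffMeasure_image_le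
      (by positivity)) ?_
    exact ENNReal.mul_lt_top
      (ENNReal.rpow_lt_top_of_nonneg (by positivity) ENNReal.coe_ne_top) hB
  calc μH[(n:ℝ)] {ξ : EuclideanSpace ℝ (Fin (n+1)) | ‖ξ‖ = 1}
      ≤ μH[(n:ℝ)] (⋃ i : Fin (n+1), (graphMap i 1 '' B ∪ graphMap i (-1) '' B)) :=
        measure_mono hcover
    _ ≤ ∑ i : Fin (n+1), μH[(n:ℝ)] (graphMap i 1 '' B ∪ graphMap i (-1) '' B) :=
        measure_iUnion_fintype_le _ _
    _ ≤ ∑ i : Fin (n+1), (μH[(n:ℝ)] (graphMap i 1 '' B) + μH[(n:ℝ)] (graphMap i (-1) '' B)) :=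
        Finset.sum_le_sum fun i _ => measure_union_le _ _
    _ < ⊤ := ENNReal.sum_lt_top.mpr fun i _ =>
        ENNReal.add_lt_top.mpr ⟨himg i 1 (by norm_num), himg i (-1) (by norm_num)⟩

lemma graphMap_zero (i : Fin (n+1)) :
    graphMap (n := n) i 1 0 = EuclideanSpace.single i (1:ℝ) := by
  ext k
  rcases eq_or_ne k i with hk | hk
  · rw [hk, graphMap_apply_same]
    simp [EuclideanSpace.single_apply]
  · obtain ⟨j, rfl⟩ := Fin.exists_succAbove_eq hk
    rw [graphMap_apply_succAbove]
    simp [EuclideanSpace.single_apply, Fin.succAbove_ne i j]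

lemma cap_measure_pos (i : Fin (n+1)) {V : Set (EuclideanSpace ℝ (Fin (n+1)))}
    (hV : IsOpen V) (hiV : EuclideanSpace.single i (1:ℝ) ∈ V) :
    0 < μH[(n:ℝ)] (V ∩ {ξ : EuclideanSpace ℝ (Fin (n+1)) | ‖ξ‖ = 1}) := by
  haveI := haarF (n := n)
  have hc : (0:ℝ) < 1/2 := by norm_num
  set B : Set (EuclideanSpace ℝ (Fin n)) := {y | ‖y‖^2 ≤ 1 - 1/2} with hBdef
  have hlip := graphMap_lipschitzOn (n := n) i (s := 1) (by norm_num) hc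
  have hBnhds : B ∈ nhds (0 : EuclideanSpace ℝ (Fin n)) := by
    apply Filter.mem_of_superset (Metric.ball_mem_nhds 0 (by norm_num : (0:ℝ) < 1/2))
    intro y hy
    simp only [Metric.mem_ball, dist_zero_right] at hy
    simp only [hBdef, mem_setOf_eq]
    nlinarith [norm_nonneg y]
  have hca : ContinuousAt (graphMap i 1) 0 := hlip.continuousOn.continuousAt hBnhds
  have hpre : (graphMap i 1) ⁻¹' V ∈ nhds (0 : EuclideanSpace ℝ (Fin n)) := by
    apply hca.preimage_mem_nhds
    apply hV.mem_nhds
    rw [graphMap_zero]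
    exact hiV
  obtain ⟨δ, hδpos, hδ⟩ := Metric.mem_nhds_iff.mp (Filter.inter_mem hpre hBnhds)
  have hsub : Metric.ball (0 : EuclideanSpace ℝ (Fin n)) δ ⊆
      proj i '' (V ∩ {ξ : EuclideanSpace ℝ (Fin (n+1)) | ‖ξ‖ = 1}) := by
    intro y hy
    obtain ⟨hyV, hyB⟩ := hδ hy
    refine ⟨graphMap i 1 y, ⟨hyV, ?_⟩, proj_graphMap i 1 y⟩
    simp only [mem_setOf_eq]
    apply norm_graphMap i (by norm_num)
    simp only [hBdef, mem_setOf_eq] at hyB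
    linarith
  have h1 : 0 < (μH[(n:ℝ)] : Measure (EuclideanSpace ℝ (Fin n))) (Metric.ball 0 δ) :=
    Metric.isOpen_ball.measure_pos (μH[(n:ℝ)] : Measure (EuclideanSpace ℝ (Fin n)))
      (Metric.nonempty_ball.mpr hδpos)
  have h2 : (μH[(n:ℝ)] : Measure (EuclideanSpace ℝ (Fin n))) (Metric.ball 0 δ)
      ≤ (μH[(n:ℝ)] : Measure (EuclideanSpace ℝ (Fin n)))
        (proj i '' (V ∩ {ξ : EuclideanSpace ℝ (Fin (n+1)) | ‖ξ‖ = 1})) :=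
    measure_mono hsub
  have h3 := (proj_lipschitz (n := n) i).hausdorffMeasure_image_le
    (by positivity : (0:ℝ) ≤ (n:ℝ)) (V ∩ {ξ : EuclideanSpace ℝ (Fin (n+1)) | ‖ξ‖ = 1})
  rw [ENNReal.coe_one, ENNReal.one_rpow, one_mul] at h3
  exact lt_of_lt_of_le h1 (le_trans h2 h3)

end MomentAux

open MomentAux in
/-- the matrix `M_{ij} = ∫_{|ξ|=1} ξᵢ²ξⱼ² dσ(ξ)` is positive definite, and in
particular invertible. -/
theorem moment_matrix_posDef
    (d : ℕ) (hd : 1 ≤ d)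
    (M : Matrix (Fin d) (Fin d) ℝ)
    (hM : ∀ i j : Fin d, M i j =
      ∫ ξ in {ξ : EuclideanSpace ℝ (Fin d) | ‖ξ‖ = 1},
        (ξ i) ^ 2 * (ξ j) ^ 2 ∂(μH[(d : ℝ) - 1])) :
    M.PosDef ∧ IsUnit M.det := by
  obtain ⟨n, rfl⟩ : ∃ n, d = n + 1 := ⟨d - 1, (Nat.succ_pred_eq_of_pos hd).symm⟩
  have hexp : ((n+1:ℕ):ℝ) - 1 = (n:ℝ) := by push_cast; ring
  simp only [hexp] at hM
  set S := {ξ : EuclideanSpace ℝ (Fin (n+1)) | ‖ξ‖ = 1} with hSdef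
  have hSmeas : MeasurableSet S :=
    (isClosed_eq continuous_norm continuous_const).measurableSet
  haveI hfin : IsFiniteMeasure
      ((μH[(n:ℝ)] : Measure (EuclideanSpace ℝ (Fin (n+1)))).restrict S) := by
    constructor
    rw [Measure.restrict_apply_univ]
    exact sphere_measure_lt_top n
  have hcoord_sq : ∀ ξ ∈ S, ∀ i : Fin (n+1), (ξ i)^2 ≤ 1 := by
    intro ξ hξ i
    have hξ' : ‖ξ‖ = 1 := hξ
    have h1 : ∑ j, (ξ j)^2 = 1 := by
      rw [← euclid_sq_norm ξ, hξ']; norm_num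
    have h2 := Finset.single_le_sum (f := fun j => (ξ j)^2)
      (fun j _ => sq_nonneg _) (Finset.mem_univ i)
    dsimp only at h2
    linarith
  have hint : ∀ i j : Fin (n+1), IntegrableOn
      (fun ξ : EuclideanSpace ℝ (Fin (n+1)) => (ξ i)^2 * (ξ j)^2) S μH[(n:ℝ)] := by
    intro i j
    have hcont : Continuous fun ξ : EuclideanSpace ℝ (Fin (n+1)) => (ξ i)^2 * (ξ j)^2 :=
      ((PiLp.continuous_apply _ _ i).pow 2).mul ((PiLp.continuous_apply _ _ j).pow 2)
    refine Integrable.mono' (integrable_const 1) hcont.aestronglyMeasurable ?_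
    rw [ae_restrict_iff' hSmeas]
    filter_upwards with ξ hξ
    have h1 := hcoord_sq ξ hξ i
    have h2 := hcoord_sq ξ hξ j
    rw [Real.norm_eq_abs, abs_mul, abs_of_nonneg (sq_nonneg (ξ i)),
      abs_of_nonneg (sq_nonneg (ξ j))]
    nlinarith [sq_nonneg (ξ i), sq_nonneg (ξ j)]
  have hpt : ∀ (x : Fin (n+1) → ℝ) (ξ : EuclideanSpace ℝ (Fin (n+1))),
      (∑ i, x i * (ξ i)^2)^2 = ∑ i, ∑ j, (x i * x j) * ((ξ i)^2 * (ξ j)^2) := by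
    intro x ξ
    rw [sq, Finset.sum_mul_sum]
    exact Finset.sum_congr rfl fun i _ => Finset.sum_congr rfl fun j _ => by ring
  have hquad : ∀ x : Fin (n+1) → ℝ,
      (x ⬝ᵥ M *ᵥ x) = ∫ ξ in S, (∑ i, x i * (ξ i)^2)^2 ∂μH[(n:ℝ)] := by
    intro x
    calc x ⬝ᵥ M *ᵥ x = ∑ i, ∑ j, (x i * x j) * M i j := by
          simp only [dotProduct, Matrix.mulVec, Finset.mul_sum]
          exact Finset.sum_congr rfl fun i _ => Finset.sum_congr rfl fun j _ => by ring
      _ = ∑ i, ∑ j, ∫ ξ in S, (x i * x j) * ((ξ i)^2 * (ξ j)^2) ∂μH[(n:ℝ)] := by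
          refine Finset.sum_congr rfl fun i _ => Finset.sum_congr rfl fun j _ => ?_
          rw [hM i j, integral_const_mul]
      _ = ∑ i, ∫ ξ in S, ∑ j, (x i * x j) * ((ξ i)^2 * (ξ j)^2) ∂μH[(n:ℝ)] := by
          refine Finset.sum_congr rfl fun i _ => ?_
          exact (integral_finset_sum Finset.univ fun j _ => ((hint i j).const_mul _)).symm
      _ = ∫ ξ in S, ∑ i, ∑ j, (x i * x j) * ((ξ i)^2 * (ξ j)^2) ∂μH[(n:ℝ)] :=
          (integral_finset_sum Finset.univ fun i _ =>
            integrable_finset_sum Finset.univ fun j _ => ((hint i j).const_mul _)).symm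
      _ = ∫ ξ in S, (∑ i, x i * (ξ i)^2)^2 ∂μH[(n:ℝ)] :=
          integral_congr_ae (Filter.Eventually.of_forall fun ξ => (hpt x ξ).symm)
  have hherm : M.IsHermitian := by
    have : Mᴴ = M := by
      ext i j
      rw [Matrix.conjTranspose_apply, star_trivial, hM i j, hM j i]
      exact integral_congr_ae (Filter.Eventually.of_forall fun ξ => mul_comm _ _)
    exact this
  have hposdef : M.PosDef := by
    refine posDef_iff_dotProduct_mulVec.mpr ⟨hherm, fun x hx => ?_⟩
    have hstar : star x = x := by simp
    rw [hstar, hquad x]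
    obtain ⟨i, hi⟩ := Function.ne_iff.mp hx
    set F := fun ξ : EuclideanSpace ℝ (Fin (n+1)) => (∑ i, x i * (ξ i)^2)^2 with hFdef
    have hFcont : Continuous F := by
      apply Continuous.pow
      exact continuous_finset_sum _ fun i _ =>
        continuous_const.mul ((PiLp.continuous_apply _ _ i).pow 2)
    have hFint : IntegrableOn F S μH[(n:ℝ)] := by
      have heq : F = fun ξ => ∑ i, ∑ j, (x i * x j) * ((ξ i)^2 * (ξ j)^2) :=
        funext fun ξ => hpt x ξ
      rw [heq]
      exact integrable_finset_sum Finset.univ fun i _ =>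
        integrable_finset_sum Finset.univ fun j _ => ((hint i j).const_mul _)
    refine (setIntegral_pos_iff_support_of_nonneg_ae ?_ hFint).mpr ?_
    · exact Filter.Eventually.of_forall fun ξ => sq_nonneg _
    · have hopen : IsOpen (Function.support F) := by
        rw [Function.support_eq_preimage]
        exact isOpen_compl_singleton.preimage hFcont
      have hmem : EuclideanSpace.single i (1:ℝ) ∈ Function.support F := by
        simp only [Function.mem_support, hFdef]
        have hsum : ∑ j, x j * (EuclideanSpace.single i (1:ℝ) j)^2 = x i := by
          simp [EuclideanSpace.single_apply]
        rw [hsum]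
        exact pow_ne_zero _ hi
      exact cap_measure_pos i hopen hmem
  exact ⟨hposdef, isUnit_iff_ne_zero.mpr (ne_of_gt hposdef.det_pos)⟩
end
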